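/- Let G = (V,E,c) be a finite edge-coloured directed multigraph with edge colours in {1,…,p}, and let G' be the digraph with vertex set V ∪ {v_e : e ∈ E} that has, for each edge e = (u,v) ∈ E, the edges (u, v_e) and (v_e, v); let α be the vertex colouring of G' given by α(v_e) = c(e) for e ∈ E and α(w) = 0 for w ∈ V. Then a vertex colouring β of V is edge-colour stable for G if and only if there exists a stable colouring β' of G' whose partition refines π_α and whose restriction to V induces the same partition of V as β. -/

import Mathlib

/-- The adjacency relation of the digraph `G'` obtained from the edge-coloured
multigraph with edge set `E` (with source and target maps `src`, `tgt`): its vertices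
are `V ⊕ E`, and each edge `e` gives rise to the two arcs `(src e, v_e)`
and `(v_e, tgt e)`. -/
def auxAdj {V E : Type*} (src tgt : E → V) : (V ⊕ E) → (V ⊕ E) → Prop := fun a b =>
  (∃ e, a = Sum.inl (src e) ∧ b = Sum.inr e) ∨
  (∃ e, a = Sum.inr e ∧ b = Sum.inl (tgt e))

/-- The initial colouring `α` on `V ⊕ E`: original vertices get colour `0`, and the new
vertex `v_e` gets the colour `c e` of the edge `e`. -/
def auxColouring {V E : Type*} (c : E → ℕ) : (V ⊕ E) → ℕ
  | Sum.inl _ => 0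
  | Sum.inr e => c e

/-- `d⁺_j(u, C)`: the number of edges of colour `j` leaving `u` whose head lies in `C`. -/
noncomputable def colOutDeg {V E : Type*} (src tgt : E → V) (c : E → ℕ) (j : ℕ)
    (u : V) (C : Set V) : ℕ :=
  {e : E | src e = u ∧ c e = j ∧ tgt e ∈ C}.ncard

/-- `β` is an edge-colour stable vertex colouring of the `p`-edge-coloured multigraph:
vertices of equal colour have, for each edge colour `j ∈ {1,…,p}` and each colour class
`C` of `β`, the same number of `j`-coloured edges into `C`. -/
def EdgeColourStable {V E : Type*} (p : ℕ) (src tgt : E → V) (c : E → ℕ)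
    (β : V → ℕ) : Prop :=
  ∀ u v, β u = β v → ∀ j, 1 ≤ j → j ≤ p → ∀ i,
    colOutDeg src tgt c j u {x | β x = i} = colOutDeg src tgt c j v {x | β x = i}

/-- `γ` is a stable colouring of the digraph with adjacency relation `adj`: vertices of
equal colour have the same number of out-neighbours in every colour class. -/
def StableDigraphColouring {W : Type*} (adj : W → W → Prop) (γ : W → ℕ) : Prop :=
  ∀ a b, γ a = γ b → ∀ i,
    {x | adj a x ∧ γ x = i}.ncard = {x | adj b x ∧ γ x = i}.ncard

/-- Out-neighbourhood of an original vertex in the auxiliary digraph. -/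
lemma outSet_inl {V E : Type*} (src tgt : E → V) (γ : (V ⊕ E) → ℕ) (u : V) (i : ℕ) :
    {x | auxAdj src tgt (Sum.inl u) x ∧ γ x = i} =
      Sum.inr '' {e | src e = u ∧ γ (Sum.inr e) = i} := by
  ext x
  constructor
  · rintro ⟨hadj, hx⟩
    rcases hadj with ⟨e, he1, he2⟩ | ⟨e, he1, he2⟩
    · refine ⟨e, ⟨(Sum.inl.injEq _ _ ▸ he1).symm, he2 ▸ hx⟩, he2.symm⟩
    · exact absurd he1 (by simp)
  · rintro ⟨e, ⟨h1, h2⟩, rfl⟩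
    exact ⟨Or.inl ⟨e, by rw [h1], rfl⟩, h2⟩

/-- Out-neighbourhood count of an edge-vertex in the auxiliary digraph. -/
lemma outSet_inr {V E : Type*} (src tgt : E → V) (γ : (V ⊕ E) → ℕ) (e : E) (i : ℕ) :
    {x | auxAdj src tgt (Sum.inr e) x ∧ γ x = i}.ncard =
      if γ (Sum.inl (tgt e)) = i then 1 else 0 := by
  classical
  have hset : {x | auxAdj src tgt (Sum.inr e) x ∧ γ x = i} =
      {x | x = Sum.inl (tgt e) ∧ γ x = i} := by
    ext x
    simp only [Set.mem_setOf_eq, auxAdj]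
    constructor
    · rintro ⟨⟨e', he1, _⟩ | ⟨e', he1, he2⟩, hx⟩
      · exact absurd he1 (by simp)
      · obtain rfl : e = e' := by simpa using he1
        exact ⟨he2, hx⟩
    · rintro ⟨rfl, hx⟩
      exact ⟨Or.inr ⟨e, rfl, rfl⟩, hx⟩
  rw [hset]
  split_ifs with h
  · have : {x | x = Sum.inl (tgt e) ∧ γ x = i} = {Sum.inl (tgt e)} := by
      ext x; simp only [Set.mem_setOf_eq, Set.mem_singleton_iff]
      exact ⟨fun ⟨h1, _⟩ => h1, fun h1 => ⟨h1, h1 ▸ h⟩⟩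
    rw [this, Set.ncard_singleton]
  · have : {x | x = Sum.inl (tgt e) ∧ γ x = i} = (∅ : Set (V ⊕ E)) := by
      ext x; simp only [Set.mem_setOf_eq, Set.mem_empty_iff_false, iff_false]
      rintro ⟨rfl, hx⟩; exact h hx
    rw [this, Set.ncard_empty]

lemma ncard_setOf_eq_card_filter {α : Type*} [Fintype α] (q : α → Prop) [DecidablePred q] :
    {x | q x}.ncard = (Finset.univ.filter q).card := by
  rw [Set.ncard_eq_toFinset_card']
  congr 1
  ext x
  simp

/-- Vertices `u, v` of equal `β`-colour see equally many edges of each colour into each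
`β`-class, even without the constraint `1 ≤ j ≤ p` (outside the range both counts are 0). -/
lemma key_count {V E : Type*} (p : ℕ) (src tgt : E → V) (c : E → ℕ)
    (hc : ∀ e, 1 ≤ c e ∧ c e ≤ p) (β : V → ℕ) (hβ : EdgeColourStable p src tgt c β)
    (u v : V) (huv : β u = β v) (j l : ℕ) :
    {e | src e = u ∧ c e = j ∧ β (tgt e) = l}.ncard =
      {e | src e = v ∧ c e = j ∧ β (tgt e) = l}.ncard := by
  by_cases hj : 1 ≤ j ∧ j ≤ p
  · exact hβ u v huv j hj.1 hj.2 l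
  · have h1 : {e | src e = u ∧ c e = j ∧ β (tgt e) = l} = (∅ : Set E) := by
      ext e; simp only [Set.mem_setOf_eq, Set.mem_empty_iff_false, iff_false]
      rintro ⟨_, rfl, _⟩; exact hj ⟨(hc e).1, (hc e).2⟩
    have h2 : {e | src e = v ∧ c e = j ∧ β (tgt e) = l} = (∅ : Set E) := by
      ext e; simp only [Set.mem_setOf_eq, Set.mem_empty_iff_false, iff_false]
      rintro ⟨_, rfl, _⟩; exact hj ⟨(hc e).1, (hc e).2⟩
    rw [h1, h2]

/-- The stable colouring of the auxiliary digraph constructed from `β`. -/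
def fwdCol {V E : Type*} (src tgt : E → V) (c : E → ℕ) (β : V → ℕ) : (V ⊕ E) → ℕ
  | Sum.inl u => 2 * β u
  | Sum.inr e => 2 * Nat.pair (c e) (Nat.pair (β (src e)) (β (tgt e))) + 1

@[simp] lemma fwdCol_inl {V E : Type*} (src tgt : E → V) (c : E → ℕ) (β : V → ℕ) (u : V) :
    fwdCol src tgt c β (Sum.inl u) = 2 * β u := rfl

@[simp] lemma fwdCol_inr {V E : Type*} (src tgt : E → V) (c : E → ℕ) (β : V → ℕ) (e : E) :
    fwdCol src tgt c β (Sum.inr e) =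
      2 * Nat.pair (c e) (Nat.pair (β (src e)) (β (tgt e))) + 1 := rfl

/-- For a finite `p`-edge-coloured directed multigraph `G = (V,E,c)`
and the associated digraph `G'` on `V ⊕ E` with initial colouring `α`, a vertex
colouring `β` of `V` is edge-colour stable for `G` iff there is a stable colouring `β'`
of `G'` whose partition refines `π_α` and whose restriction to `V` induces the same
partition of `V` as `β`. -/
theorem edge_coloured_reduction {V E : Type*} [Finite V] [Finite E]
    (p : ℕ) (src tgt : E → V) (c : E → ℕ) (hc : ∀ e, 1 ≤ c e ∧ c e ≤ p)
    (β : V → ℕ) :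
    EdgeColourStable p src tgt c β ↔
      ∃ β' : (V ⊕ E) → ℕ,
        StableDigraphColouring (auxAdj src tgt) β' ∧
        (∀ a b, β' a = β' b → auxColouring c a = auxColouring c b) ∧
        (∀ u v : V, β' (Sum.inl u) = β' (Sum.inl v) ↔ β u = β v) := by
  classical
  constructor
  · -- forward direction
    intro hβ
    refine ⟨fwdCol src tgt c β, ?_, ?_, ?_⟩
    · -- stability
      intro a b hab i
      match a, b with
      | Sum.inl u, Sum.inl v =>
        simp only [fwdCol_inl] at hab
        have huv : β u = β v := by omega
        rw [outSet_inl, outSet_inl, Set.ncard_image_of_injective _ Sum.inr_injective,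
          Set.ncard_image_of_injective _ Sum.inr_injective]
        simp only [fwdCol_inr]
        by_cases hodd : ∃ m, i = 2 * m + 1
        · obtain ⟨m, rfl⟩ := hodd
          have hiff : ∀ (w : V) (e : E), src e = w →
              ((2 * Nat.pair (c e) (Nat.pair (β (src e)) (β (tgt e))) + 1 = 2 * m + 1) ↔
              (c e = m.unpair.1 ∧ β w = m.unpair.2.unpair.1 ∧
                β (tgt e) = m.unpair.2.unpair.2)) := by
            intro w e hw
            constructor
            · intro h
              have hm : Nat.pair (c e) (Nat.pair (β (src e)) (β (tgt e))) = m := by omega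
              subst hm
              refine ⟨by simp, ?_, by simp⟩
              rw [← hw]; simp
            · rintro ⟨h1, h2, h3⟩
              rw [h1, hw, h2, h3, Nat.pair_unpair, Nat.pair_unpair]
          have hU : {e | src e = u ∧
                2 * Nat.pair (c e) (Nat.pair (β (src e)) (β (tgt e))) + 1 = 2 * m + 1} =
              {e | src e = u ∧ (c e = m.unpair.1 ∧ β u = m.unpair.2.unpair.1 ∧
                β (tgt e) = m.unpair.2.unpair.2)} := by
            ext e; simp only [Set.mem_setOf_eq]
            exact and_congr_right fun hw => hiff u e hw
          have hV : {e | src e = v ∧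
                2 * Nat.pair (c e) (Nat.pair (β (src e)) (β (tgt e))) + 1 = 2 * m + 1} =
              {e | src e = v ∧ (c e = m.unpair.1 ∧ β v = m.unpair.2.unpair.1 ∧
                β (tgt e) = m.unpair.2.unpair.2)} := by
            ext e; simp only [Set.mem_setOf_eq]
            exact and_congr_right fun hw => hiff v e hw
          rw [hU, hV]
          by_cases hk : β u = m.unpair.2.unpair.1
          · have hU' : {e | src e = u ∧ (c e = m.unpair.1 ∧ β u = m.unpair.2.unpair.1 ∧
                  β (tgt e) = m.unpair.2.unpair.2)} =
                {e | src e = u ∧ c e = m.unpair.1 ∧ β (tgt e) = m.unpair.2.unpair.2} := by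
              ext e; simp only [Set.mem_setOf_eq]; tauto
            have hV' : {e | src e = v ∧ (c e = m.unpair.1 ∧ β v = m.unpair.2.unpair.1 ∧
                  β (tgt e) = m.unpair.2.unpair.2)} =
                {e | src e = v ∧ c e = m.unpair.1 ∧ β (tgt e) = m.unpair.2.unpair.2} := by
              ext e; simp only [Set.mem_setOf_eq]
              have : β v = m.unpair.2.unpair.1 := huv ▸ hk
              tauto
            rw [hU', hV']
            exact key_count p src tgt c hc β hβ u v huv _ _
          · have hU' : {e | src e = u ∧ (c e = m.unpair.1 ∧ β u = m.unpair.2.unpair.1 ∧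
                  β (tgt e) = m.unpair.2.unpair.2)} = (∅ : Set E) := by
              ext e; simp only [Set.mem_setOf_eq, Set.mem_empty_iff_false, iff_false]
              rintro ⟨_, _, h2, _⟩; exact hk h2
            have hV' : {e | src e = v ∧ (c e = m.unpair.1 ∧ β v = m.unpair.2.unpair.1 ∧
                  β (tgt e) = m.unpair.2.unpair.2)} = (∅ : Set E) := by
              ext e; simp only [Set.mem_setOf_eq, Set.mem_empty_iff_false, iff_false]
              rintro ⟨_, _, h2, _⟩; exact hk (huv ▸ h2)
            rw [hU', hV']
        · have hU : {e | src e = u ∧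
                2 * Nat.pair (c e) (Nat.pair (β (src e)) (β (tgt e))) + 1 = i} =
              (∅ : Set E) := by
            ext e; simp only [Set.mem_setOf_eq, Set.mem_empty_iff_false, iff_false]
            rintro ⟨_, h⟩; exact hodd ⟨_, h.symm⟩
          have hV : {e | src e = v ∧
                2 * Nat.pair (c e) (Nat.pair (β (src e)) (β (tgt e))) + 1 = i} =
              (∅ : Set E) := by
            ext e; simp only [Set.mem_setOf_eq, Set.mem_empty_iff_false, iff_false]
            rintro ⟨_, h⟩; exact hodd ⟨_, h.symm⟩
          rw [hU, hV]
      | Sum.inl u, Sum.inr e =>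
        exact absurd hab (by simp only [fwdCol_inl, fwdCol_inr]; omega)
      | Sum.inr e, Sum.inl u =>
        exact absurd hab (by simp only [fwdCol_inl, fwdCol_inr]; omega)
      | Sum.inr e, Sum.inr f =>
        simp only [fwdCol_inr] at hab
        have hpair : Nat.pair (c e) (Nat.pair (β (src e)) (β (tgt e))) =
            Nat.pair (c f) (Nat.pair (β (src f)) (β (tgt f))) := by omega
        have h2 := (Nat.pair_eq_pair.mp (Nat.pair_eq_pair.mp hpair).2).2
        rw [outSet_inr, outSet_inr]
        simp only [fwdCol_inl, h2]
        exact if_congr Iff.rfl rfl rfl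
    · -- refinement of α
      intro a b hab
      match a, b with
      | Sum.inl u, Sum.inl v => rfl
      | Sum.inl u, Sum.inr e =>
        exact absurd hab (by simp only [fwdCol_inl, fwdCol_inr]; omega)
      | Sum.inr e, Sum.inl u =>
        exact absurd hab (by simp only [fwdCol_inl, fwdCol_inr]; omega)
      | Sum.inr e, Sum.inr f =>
        simp only [fwdCol_inr] at hab
        have hpair : Nat.pair (c e) (Nat.pair (β (src e)) (β (tgt e))) =
            Nat.pair (c f) (Nat.pair (β (src f)) (β (tgt f))) := by omega
        exact (Nat.pair_eq_pair.mp hpair).1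
    · -- restriction
      intro u v
      simp only [fwdCol_inl]
      omega
  · -- backward direction
    rintro ⟨β', hstab, href, hres⟩
    intro u v huv j _ _ i
    haveI : Fintype E := Fintype.ofFinite E
    set f : E → ℕ := fun e => β' (Sum.inr e) with hf
    -- constancy on β'-classes of edge-vertices
    have hconst : ∀ e e', f e = f e' → c e = c e' ∧ β (tgt e) = β (tgt e') := by
      intro e e' he
      constructor
      · exact href (Sum.inr e) (Sum.inr e') he
      · have hcard := hstab (Sum.inr e) (Sum.inr e') he (β' (Sum.inl (tgt e)))
        by_cases h : β' (Sum.inl (tgt e')) = β' (Sum.inl (tgt e))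
        · exact (hres (tgt e) (tgt e')).mp h.symm
        · rw [outSet_inr, outSet_inr, if_pos rfl, if_neg h] at hcard
          omega
    unfold colOutDeg
    simp only [Set.mem_setOf_eq]
    set T : Finset ℕ :=
      (Finset.univ.filter (fun e => c e = j ∧ β (tgt e) = i)).image f with hT
    have hsetEq : ∀ w : V, {e | src e = w ∧ c e = j ∧ β (tgt e) = i} =
        {e | src e = w ∧ f e ∈ T} := by
      intro w
      ext e
      simp only [Set.mem_setOf_eq]
      constructor
      · rintro ⟨h1, h2, h3⟩
        refine ⟨h1, Finset.mem_image.mpr ⟨e, ?_, rfl⟩⟩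
        simp [h2, h3]
      · rintro ⟨h1, h2⟩
        obtain ⟨e', he', hfe⟩ := Finset.mem_image.mp h2
        simp only [Finset.mem_filter, Finset.mem_univ, true_and] at he'
        obtain ⟨hce', hte'⟩ := hconst e' e hfe
        exact ⟨h1, hce' ▸ he'.1, hte' ▸ he'.2⟩
    have hcount : ∀ w : V, {e | src e = w ∧ c e = j ∧ β (tgt e) = i}.ncard =
        ∑ k ∈ T, {e | src e = w ∧ f e = k}.ncard := by
      intro w
      rw [hsetEq w, ncard_setOf_eq_card_filter]
      rw [Finset.card_eq_sum_card_fiberwise (f := f) (t := T)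
        (fun e he => (Finset.mem_filter.mp he).2.2)]
      refine Finset.sum_congr rfl fun k hk => ?_
      rw [ncard_setOf_eq_card_filter]
      congr 1
      ext e
      simp only [Finset.mem_filter, Finset.mem_univ, true_and]
      constructor
      · rintro ⟨⟨h1, _⟩, h3⟩; exact ⟨h1, h3⟩
      · rintro ⟨h1, h2⟩; exact ⟨⟨h1, h2 ▸ hk⟩, h2⟩
    rw [hcount u, hcount v]
    refine Finset.sum_congr rfl fun k _ => ?_
    have hstabuv := hstab (Sum.inl u) (Sum.inl v) ((hres u v).mpr huv) k
    rw [outSet_inl, outSet_inl, Set.ncard_image_of_injective _ Sum.inr_injective,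
      Set.ncard_image_of_injective _ Sum.inr_injective] at hstabuv
    exact hstabuv
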